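/- For every finite poset X and every filter F on X, every complex eigenvalue of the 0–1 matrix M_F^X is an integer; equivalently, the characteristic polynomial of M_F^X splits over ℤ into linear factors with integer roots. -/

import Mathlib

attribute [local instance] Classical.propDecidable

/-- A linear extension of a partially ordered set `X` with `n` elements:
an order-preserving bijection `X ≃ Fin n`. -/
def LinExt (X : Type*) [PartialOrder X] (n : ℕ) : Type _ :=
  {P : X ≃ Fin n // ∀ a b : X, a ≤ b → P a ≤ P b}

/-- A filter on a poset `X`: a surjective order-preserving map `F : X → {1,…,rank}`
(we use `Fin rank` for `{1,…,rank}`). -/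
structure PFilter (X : Type*) [PartialOrder X] where
  rank : ℕ
  toFun : X → Fin rank
  surjective : Function.Surjective toFun
  mono : ∀ a b : X, a ≤ b → toFun a ≤ toFun b

/-- A linear extension, viewed as a filter of rank `n`. -/
def LinExt.toFilter {X : Type*} [PartialOrder X] {n : ℕ} (P : LinExt X n) : PFilter X :=
  ⟨n, P.1, P.1.surjective, P.2⟩

/-- `F` is the filter product `F″·F′`: (i) `F″(u) < F″(v)` implies `F(u) < F(v)`, and
(ii) if `F″(u) = F″(v)` then `F(u) < F(v)` iff `F′(u) < F′(v)`. -/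
def IsFilterProd {X : Type*} [PartialOrder X] (F'' F' F : PFilter X) : Prop :=
  (∀ u v : X, F''.toFun u < F''.toFun v → F.toFun u < F.toFun v) ∧
  (∀ u v : X, F''.toFun u = F''.toFun v → (F.toFun u < F.toFun v ↔ F'.toFun u < F'.toFun v))

/-- The matrix `M_F^X`, indexed by linear extensions, with `(M_F^X)_{PQ} = 1` if
`Q = F·P` (equivalently, `Q` satisfies the filter-product characterization of `F·P`,
which determines `F·P` uniquely) and `0` otherwise. -/
noncomputable def filterMatrix {X : Type*} [PartialOrder X] (n : ℕ) (F : PFilter X) :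
    Matrix (LinExt X n) (LinExt X n) ℤ :=
  fun P Q => if IsFilterProd F P.toFilter Q.toFilter then 1 else 0

open Polynomial Matrix in
lemma charpoly_similar {ι R : Type*} [Fintype ι] [DecidableEq ι] [CommRing R]
    (B Binv A : Matrix ι ι R) (h1 : B * Binv = 1) :
    (B * A * Binv).charpoly = A.charpoly := by
  have key : (C : R →+* R[X]).mapMatrix B * charmatrix A * (C : R →+* R[X]).mapMatrix Binv
      = charmatrix (B * A * Binv) := by
    unfold charmatrix
    rw [mul_sub, sub_mul]
    congr 1
    · calc (C : R →+* R[X]).mapMatrix B * Matrix.scalar ι (X : R[X])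
            * (C : R →+* R[X]).mapMatrix Binv
          = Matrix.scalar ι (X : R[X]) * (C : R →+* R[X]).mapMatrix B
            * (C : R →+* R[X]).mapMatrix Binv := by
            rw [(Matrix.scalar_commute (X : R[X]) (Commute.all X) _).eq]
      _ = Matrix.scalar ι (X : R[X])
            * ((C : R →+* R[X]).mapMatrix B * (C : R →+* R[X]).mapMatrix Binv) := by
            rw [Matrix.mul_assoc]
      _ = Matrix.scalar ι (X : R[X]) := by rw [← _root_.map_mul, h1, _root_.map_one, mul_one]
    · rw [← _root_.map_mul, ← _root_.map_mul]
  rw [Matrix.charpoly, Matrix.charpoly, ← key, Matrix.det_mul, Matrix.det_mul]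
  have h2 : ((C : R →+* R[X]).mapMatrix B).det * ((C : R →+* R[X]).mapMatrix Binv).det = 1 := by
    rw [← Matrix.det_mul, ← _root_.map_mul, h1, _root_.map_one, Matrix.det_one]
  calc ((C : R →+* R[X]).mapMatrix B).det * (charmatrix A).det
        * ((C : R →+* R[X]).mapMatrix Binv).det
      = (charmatrix A).det * (((C : R →+* R[X]).mapMatrix B).det
          * ((C : R →+* R[X]).mapMatrix Binv).det) := by ring
  _ = (charmatrix A).det := by rw [h2, mul_one]

open Polynomial Matrix in
lemma charpoly_diagonal' {ι R : Type*} [Fintype ι] [DecidableEq ι] [CommRing R] (d : ι → R) :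
    (Matrix.diagonal d).charpoly = ∏ x : ι, (X - C (d x)) := by
  have : charmatrix (Matrix.diagonal d) = Matrix.diagonal (fun x => (X : R[X]) - C (d x)) := by
    ext i j
    by_cases h : i = j
    · subst h; simp
    · rw [charmatrix_apply_ne _ _ _ h, Matrix.diagonal_apply_ne _ h,
        Matrix.diagonal_apply_ne _ h, map_zero, neg_zero]
  rw [Matrix.charpoly, this, Matrix.det_diagonal]

open Polynomial Matrix in
lemma charpoly_of_idem {ι : Type*} [Fintype ι] [DecidableEq ι] (g : ι → ι)
    (hg : ∀ x, g (g x) = g x) :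
    (Matrix.of fun x y => if g x = y then (1 : ℤ) else 0).charpoly
      = ∏ x : ι, (X - C (if g x = x then (1 : ℤ) else 0)) := by
  classical
  set d : ι → ℤ := fun x => if g x = x then 1 else 0 with hd
  set N : Matrix ι ι ℤ := Matrix.of fun x y => if g y = y ∧ g x = y ∧ x ≠ y then 1 else 0 with hN
  set M : Matrix ι ι ℤ := Matrix.of fun x y => if g x = y then (1 : ℤ) else 0 with hM
  have hN2 : N * N = 0 := by
    ext x z
    rw [Matrix.mul_apply]
    refine (Finset.sum_eq_zero fun y _ => ?_).trans rfl.symm |>.trans ?_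
    · simp only [hN, Matrix.of_apply]
      split_ifs with p1 p2
      · exact absurd (p1.1.symm.trans p2.2.1) p2.2.2
      · simp
      · simp
      · simp
    · simp
  have hBinv : (1 + N) * (1 - N) = 1 := by
    have : (1 + N) * (1 - N) = 1 - N * N := by noncomm_ring
    rw [this, hN2, sub_zero]
  have hMB : M * (1 + N) = (1 + N) * Matrix.diagonal d := by
    ext x z
    rw [Matrix.mul_apply, Matrix.mul_diagonal]
    have hsum : ∑ y, M x y * (1 + N) y z = (1 + N) (g x) z := by
      have : ∀ y, M x y * (1 + N) y z = if g x = y then (1 + N) y z else 0 := by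
        intro y; simp only [hM, Matrix.of_apply, ite_mul, one_mul, zero_mul]
      simp only [this]
      rw [Finset.sum_ite_eq]
      simp
    rw [hsum]
    simp only [Matrix.add_apply, Matrix.one_apply, hN, Matrix.of_apply, hd, hg]
    by_cases hz : g z = z <;> by_cases hxz : x = z <;> by_cases hgxz : g x = z <;>
      simp_all <;> exact hz (by rw [← hgxz, hg])
  have hMeq : M = (1 + N) * Matrix.diagonal d * (1 - N) := by
    calc M = M * ((1 + N) * (1 - N)) := by rw [hBinv, mul_one]
    _ = M * (1 + N) * (1 - N) := by rw [Matrix.mul_assoc]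
    _ = (1 + N) * Matrix.diagonal d * (1 - N) := by rw [hMB]
  rw [hMeq, charpoly_similar _ _ _ hBinv, charpoly_diagonal']

lemma exists_filterProd {X : Type*} [PartialOrder X] [Fintype X]
    (F : PFilter X) (P : LinExt X (Fintype.card X)) :
    ∃ Q : LinExt X (Fintype.card X), IsFilterProd F P.toFilter Q.toFilter := by
  classical
  set κ : X → Fin F.rank ×ₗ Fin (Fintype.card X) := fun x => toLex (F.toFun x, P.1 x) with hκ
  have hinj : Function.Injective κ := by
    intro a b hab
    have h2 : P.1 a = P.1 b := congrArg (fun p => (ofLex p).2) hab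
    exact P.1.injective h2
  set s : Finset (Fin F.rank ×ₗ Fin (Fintype.card X)) := Finset.univ.image κ with hs
  have hmem : ∀ x, κ x ∈ s := fun x => Finset.mem_image_of_mem _ (Finset.mem_univ x)
  have hcard : s.card = Fintype.card X := by
    rw [hs, Finset.card_image_of_injective _ hinj, Finset.card_univ]
  set oi := s.orderIsoOfFin hcard with hoi
  set f : X → Fin (Fintype.card X) := fun x => oi.symm ⟨κ x, hmem x⟩ with hf
  have hflt : ∀ u v : X, f u < f v ↔ κ u < κ v := by
    intro u v
    rw [hf]
    simp only []
    rw [OrderIso.lt_iff_lt]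
    exact Subtype.mk_lt_mk
  have hbij : Function.Bijective f := by
    constructor
    · intro a b hab
      have := oi.symm.injective hab
      exact hinj (Subtype.mk_eq_mk.mp this)
    · intro i
      obtain ⟨x, -, hx⟩ := Finset.mem_image.mp (oi i).2
      refine ⟨x, ?_⟩
      rw [hf]
      simp only []
      rw [show (⟨κ x, hmem x⟩ : s) = oi i from Subtype.ext hx, OrderIso.symm_apply_apply]
  have hklt : ∀ u v : X, κ u < κ v ↔
      (F.toFun u < F.toFun v ∨ (F.toFun u = F.toFun v ∧ P.1 u < P.1 v)) :=
    fun u v => Prod.Lex.lt_iff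
  have hmono : ∀ a b : X, a ≤ b → f a ≤ f b := by
    intro a b hab
    rcases eq_or_ne a b with rfl | hne
    · exact le_rfl
    · have hk : κ a < κ b := by
        rw [hklt]
        rcases lt_or_eq_of_le (F.mono a b hab) with h | h
        · exact Or.inl h
        · exact Or.inr ⟨h, lt_of_le_of_ne (P.2 a b hab) (fun he => hne (P.1.injective he))⟩
      exact le_of_lt ((hflt a b).mpr hk)
  refine ⟨⟨Equiv.ofBijective f hbij, hmono⟩, ?_, ?_⟩
  · intro u v huv
    show f u < f v
    rw [hflt, hklt]
    exact Or.inl huv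
  · intro u v huv
    show f u < f v ↔ P.1 u < P.1 v
    rw [hflt, hklt]
    constructor
    · rintro (h | ⟨-, h⟩)
      · exact absurd huv (ne_of_lt h)
      · exact h
    · intro h
      exact Or.inr ⟨huv, h⟩

lemma filterProd_unique {X : Type*} [PartialOrder X] [Fintype X]
    (F : PFilter X) (P Q Q' : LinExt X (Fintype.card X))
    (h : IsFilterProd F P.toFilter Q.toFilter) (h' : IsFilterProd F P.toFilter Q'.toFilter) :
    Q = Q' := by
  have key : ∀ u v : X, Q.1 u < Q.1 v ↔ Q'.1 u < Q'.1 v := by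
    intro u v
    rcases lt_trichotomy (F.toFun u) (F.toFun v) with hlt | heq | hgt
    · exact iff_of_true (h.1 u v hlt) (h'.1 u v hlt)
    · exact (h.2 u v heq).trans (h'.2 u v heq).symm
    · exact iff_of_false (asymm (h.1 v u hgt)) (asymm (h'.1 v u hgt))
  set e : Fin (Fintype.card X) ≃ Fin (Fintype.card X) := Q.1.symm.trans Q'.1 with he
  have hmono : StrictMono e := by
    intro i j hij
    have h1 : Q.1 (Q.1.symm i) < Q.1 (Q.1.symm j) := by simpa using hij
    exact (key _ _).mp h1
  have hid : StrictMono.orderIsoOfSurjective (e : Fin (Fintype.card X) → Fin (Fintype.card X)) hmono e.surjective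
      = OrderIso.refl (Fin (Fintype.card X)) := Subsingleton.elim _ _
  have heid : ∀ i, e i = i := by
    intro i
    have := congrArg (fun (o : Fin (Fintype.card X) ≃o Fin (Fintype.card X)) => o i) hid
    simpa [StrictMono.coe_orderIsoOfSurjective] using this
  have : Q.1 = Q'.1 := by
    apply Equiv.ext
    intro x
    have := heid (Q.1 x)
    simpa [he] using this.symm
  exact Subtype.ext this

noncomputable def prodMap {X : Type*} [PartialOrder X] [Fintype X] (F : PFilter X) :
    LinExt X (Fintype.card X) → LinExt X (Fintype.card X) :=
  fun P => Classical.choose (exists_filterProd F P)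

lemma prodMap_spec {X : Type*} [PartialOrder X] [Fintype X] (F : PFilter X)
    (P : LinExt X (Fintype.card X)) : IsFilterProd F P.toFilter (prodMap F P).toFilter :=
  Classical.choose_spec (exists_filterProd F P)

lemma prodMap_idem {X : Type*} [PartialOrder X] [Fintype X] (F : PFilter X)
    (P : LinExt X (Fintype.card X)) : prodMap F (prodMap F P) = prodMap F P := by
  have h1 : IsFilterProd F (prodMap F P).toFilter (prodMap F P).toFilter :=
    ⟨fun u v huv => (prodMap_spec F P).1 u v huv, fun u v _ => Iff.rfl⟩
  exact filterProd_unique F (prodMap F P) _ _ (prodMap_spec F (prodMap F P)) h1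

/-- For every filter `F` on a finite poset `X`, the characteristic polynomial of the 0-1
matrix `M_F^X` splits over `ℤ` into linear factors with integer roots; equivalently,
every complex eigenvalue of `M_F^X` is an integer. -/
theorem filterMatrix_charpoly_splits {X : Type*} [PartialOrder X] [Fintype X]
    [Fintype (LinExt X (Fintype.card X))] [DecidableEq (LinExt X (Fintype.card X))]
    (F : PFilter X) :
    ∃ d : LinExt X (Fintype.card X) → ℤ,
      Matrix.charpoly (filterMatrix (Fintype.card X) F) =
        ∏ P : LinExt X (Fintype.card X), (Polynomial.X - Polynomial.C (d P)) := by
  classical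
  refine ⟨fun P => if prodMap F P = P then 1 else 0, ?_⟩
  have hmat : filterMatrix (Fintype.card X) F
      = Matrix.of (fun P Q => if prodMap F P = Q then (1 : ℤ) else 0) := by
    funext P Q
    show (if IsFilterProd F P.toFilter Q.toFilter then (1 : ℤ) else 0) = _
    by_cases h : Q = prodMap F P
    · subst h
      rw [if_pos (prodMap_spec F P), Matrix.of_apply, if_pos rfl]
    · rw [if_neg, Matrix.of_apply, if_neg (fun he => h he.symm)]
      intro hip
      exact h (filterProd_unique F P Q (prodMap F P) hip (prodMap_spec F P))
  rw [hmat, charpoly_of_idem (prodMap F) (prodMap_idem F)]
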